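/- In any quandle, if elements v and w satisfy (v * w) * v = w and w *^n v = w for some positive integer n, then v *^n w = v. -/

import Mathlib

/-- A quandle: a set with a binary operation `op` such that `op x x = x`,
right translations are bijective, and `op` is right self-distributive. -/
structure Qdl (X : Type*) where
  op : X → X → X
  idem : ∀ x, op x x = x
  bij : ∀ y, Function.Bijective (fun x => op x y)
  distrib : ∀ x y z, op (op x y) z = op (op x z) (op y z)

namespace Qdl

variable {X : Type*}

/-- The right translation `S_y` as a permutation of `X`. -/
noncomputable def S (q : Qdl X) (y : X) : Equiv.Perm X := Equiv.ofBijective _ (q.bij y)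

/-- `x *^n y` : the `n`-fold application of the right translation by `y` to `x`. -/
noncomputable def npow (q : Qdl X) (x : X) (n : ℕ) (y : X) : X := ((q.S y) ^ n) x

/-- `x *^m y` for an integer `m` (negative powers use the inverse translation). -/
noncomputable def zpow (q : Qdl X) (x : X) (m : ℤ) (y : X) : X := ((q.S y) ^ m) x

theorem S_apply (q : Qdl X) (y x : X) : q.S y x = q.op x y := rfl

theorem S_mul (q : Qdl X) (y z : X) : q.S (q.op y z) * q.S z = q.S z * q.S y := by
  ext x
  simp only [Equiv.Perm.mul_apply, S_apply]
  exact (q.distrib x y z).symm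

theorem pow_hom (q : Qdl X) (y : X) (n : ℕ) (a b : X) :
    ((q.S y) ^ n) (q.op a b) = q.op (((q.S y) ^ n) a) (((q.S y) ^ n) b) := by
  induction n with
  | zero => simp
  | succ k ih =>
      simp only [pow_succ', Equiv.Perm.mul_apply, ih, S_apply]
      exact q.distrib _ _ _

end Qdl

/-- in any quandle, if `(v * w) * v = w` and `w *^n v = w` for some
positive integer `n`, then `v *^n w = v`. -/
theorem stmt10 {X : Type*} (q : Qdl X) (v w : X) (n : ℕ) (hn : 0 < n)
    (h1 : q.op (q.op v w) v = w) (h2 : q.npow w n v = w) :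
    q.npow v n w = v := by
  set a := q.S v with ha
  set b := q.S w with hb
  have hav : a v = v := by rw [ha, Qdl.S_apply, q.idem]
  have hainv : a⁻¹ v = v := a.injective (by rw [Equiv.Perm.coe_inv, Equiv.apply_symm_apply, hav])
  have hanv : ∀ m, (a ^ m) v = v := by
    intro m
    induction m with
    | zero => simp
    | succ k ih => rw [pow_succ', Equiv.Perm.mul_apply, ih, hav]
  have hanw : (a ^ n) w = w := h2
  -- the braid relation
  have e1 : q.S (q.op v w) * b = b * a := q.S_mul v w
  have e2 : b * a = a * q.S (q.op v w) := by
    have h := q.S_mul (q.op v w) v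
    rw [h1] at h
    exact h
  have hSvw : q.S (q.op v w) = a⁻¹ * (b * a) := by
    rw [e2]; group
  have braid : b * a * b = a * b * a := by
    have := e1
    rw [hSvw] at this
    calc b * a * b = a * (a⁻¹ * (b * a) * b) := by group
    _ = a * (b * a) := by rw [this]
    _ = a * b * a := by group
  have hc : (a * b) * a * (a * b)⁻¹ = b := by
    have h' : (a * b) * a = b * (a * b) := by
      calc (a * b) * a = a * b * a := by group
      _ = b * a * b := braid.symm
      _ = b * (a * b) := by group
    rw [h']; group
  have hbn : b ^ n = (a * b) * a ^ n * (a * b)⁻¹ := by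
    rw [← conj_pow, hc]
  -- u = b⁻¹ v is fixed by a^n
  set u := b⁻¹ v with hu
  have huw : q.op u w = v := by
    have : b u = v := Equiv.apply_symm_apply b v
    rwa [hb, Qdl.S_apply] at this
  have hun : (a ^ n) u = u := by
    apply (q.bij w).1
    show q.op ((a ^ n) u) w = q.op u w
    have := q.pow_hom v n u w
    rw [huw, hanw] at this
    rw [← this, ← ha, hanv n, huw]
  -- conclude
  show (b ^ n) v = v
  rw [hbn]
  simp only [Equiv.Perm.mul_apply, mul_inv_rev]
  rw [hainv]
  -- goal should now be (a * b) ((a^n) (b⁻¹ v)) = v or similar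
  calc ((a * b) : Equiv.Perm X) ((a ^ n) (b⁻¹ v)) = (a * b) u := by rw [← hu, hun]
  _ = a (b (b⁻¹ v)) := by rw [Equiv.Perm.mul_apply, hu]
  _ = v := by rw [Equiv.Perm.coe_inv, Equiv.apply_symm_apply, hav]
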